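/- Let $M = \{x \in \mathbb{R}^2 \mid 1 \leq |x| \leq 2\}$ and let $\omega : M \to \mathbb{R}$ be continuous. Then the Biot–Savart field $\tilde{v}(x) = \frac{1}{2\pi} \int_M |x - \tilde{x}|^{-2}\, \omega(\tilde{x})\, (-(x_2 - \tilde{x}_2), x_1 - \tilde{x}_1)\, d\tilde{x}$ has zero flux through each boundary circle of the annulus: for $r \in \{1, 2\}$, $\int_0^{2\pi} \tilde{v}\big(r\cos\theta, r\sin\theta\big) \cdot (\cos\theta, \sin\theta)\, r\, d\theta = 0$. -/

import Mathlib

open MeasureTheory Real Set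

/-- The closed annulus `M = {x ∈ ℝ² | 1 ≤ |x| ≤ 2}`. -/
def annulus : Set (ℝ × ℝ) :=
  {p | 1 ≤ Real.sqrt (p.1 ^ 2 + p.2 ^ 2) ∧ Real.sqrt (p.1 ^ 2 + p.2 ^ 2) ≤ 2}

/-- First component of the Biot–Savart field of vorticity `ω` on the annulus. -/
noncomputable def biotSavart₁ (ω : ℝ × ℝ → ℝ) (x : ℝ × ℝ) : ℝ :=
  (1 / (2 * π)) *
    ∫ y in annulus, ω y * (-(x.2 - y.2)) / ((x.1 - y.1) ^ 2 + (x.2 - y.2) ^ 2)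

/-- Second component of the Biot–Savart field of vorticity `ω` on the annulus. -/
noncomputable def biotSavart₂ (ω : ℝ × ℝ → ℝ) (x : ℝ × ℝ) : ℝ :=
  (1 / (2 * π)) *
    ∫ y in annulus, ω y * (x.1 - y.1) / ((x.1 - y.1) ^ 2 + (x.2 - y.2) ^ 2)

open intervalIntegral

lemma annulus_isClosed : IsClosed annulus := by
  have hc : Continuous fun p : ℝ × ℝ => Real.sqrt (p.1 ^ 2 + p.2 ^ 2) :=
    Real.continuous_sqrt.comp (by continuity)
  have : annulus = (fun p : ℝ × ℝ => Real.sqrt (p.1 ^ 2 + p.2 ^ 2)) ⁻¹' (Icc 1 2) := rfl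
  rw [this]
  exact IsClosed.preimage hc isClosed_Icc

lemma annulus_meas : MeasurableSet annulus := annulus_isClosed.measurableSet

lemma annulus_subset_box : annulus ⊆ Icc (-2:ℝ) 2 ×ˢ Icc (-2:ℝ) 2 := by
  rintro ⟨p1, p2⟩ ⟨-, h2⟩
  have hnn : (0:ℝ) ≤ p1 ^ 2 + p2 ^ 2 := by positivity
  have h1 : |p1| ≤ 2 := by
    have : Real.sqrt (p1 ^ 2) ≤ Real.sqrt (p1 ^ 2 + p2 ^ 2) :=
      Real.sqrt_le_sqrt (by nlinarith [sq_nonneg p2])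
    rw [Real.sqrt_sq_eq_abs] at this; linarith
  have h2' : |p2| ≤ 2 := by
    have : Real.sqrt (p2 ^ 2) ≤ Real.sqrt (p1 ^ 2 + p2 ^ 2) :=
      Real.sqrt_le_sqrt (by nlinarith [sq_nonneg p1])
    rw [Real.sqrt_sq_eq_abs] at this; linarith
  rw [abs_le] at h1 h2'
  exact ⟨⟨h1.1, h1.2⟩, ⟨h2'.1, h2'.2⟩⟩

lemma annulus_isCompact : IsCompact annulus := by
  refine IsCompact.of_isClosed_subset (IsCompact.prod isCompact_Icc isCompact_Icc)
    annulus_isClosed annulus_subset_box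

/-- the 1-D majorant kernel -/
noncomputable def gfun (c t : ℝ) : ℝ := |c - t| ^ (-(2:ℝ)⁻¹)

lemma abs_rpow_intervalIntegrable (a b : ℝ) :
    IntervalIntegrable (fun s : ℝ => |s| ^ (-(2:ℝ)⁻¹)) volume a b := by
  have base : ∀ c : ℝ, 0 ≤ c →
      IntervalIntegrable (fun s : ℝ => |s| ^ (-(2:ℝ)⁻¹)) volume 0 c := by
    intro c hc
    have h := intervalIntegrable_rpow' (a := 0) (b := c) (r := -(2:ℝ)⁻¹) (by norm_num)
    rw [intervalIntegrable_iff, uIoc_of_le hc] at h ⊢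
    refine h.congr_fun ?_ measurableSet_Ioc
    intro x hx
    show x ^ (-(2:ℝ)⁻¹) = |x| ^ (-(2:ℝ)⁻¹)
    rw [abs_of_pos hx.1]
  have gen : ∀ c : ℝ, IntervalIntegrable (fun s : ℝ => |s| ^ (-(2:ℝ)⁻¹)) volume 0 c := by
    intro c
    rcases le_total 0 c with hc | hc
    · exact base c hc
    · rw [IntervalIntegrable.iff_comp_neg]
      simp only [abs_neg, neg_zero]
      exact base (-c) (by linarith)
  exact (gen a).symm.trans (gen b)

lemma gfun_intervalIntegrable (c : ℝ) :
    IntervalIntegrable (fun t : ℝ => gfun c t) volume (c - 4) (c + 4) := by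
  have h := (abs_rpow_intervalIntegrable 4 (-4)).comp_sub_left c
  simpa [gfun, sub_neg_eq_add] using h

lemma gfun_integral (c : ℝ) :
    (∫ t in (c - 4)..(c + 4), gfun c t) = ∫ s in (-4:ℝ)..4, |s| ^ (-(2:ℝ)⁻¹) := by
  have h := integral_comp_sub_left (a := c - 4) (b := c + 4)
    (fun s : ℝ => |s| ^ (-(2:ℝ)⁻¹)) c
  simpa [gfun] using h

lemma key_bound {a b : ℝ} (ha : a ≠ 0) (hb : b ≠ 0) :
    |b| / (a ^ 2 + b ^ 2) ≤ |a| ^ (-(2:ℝ)⁻¹) * |b| ^ (-(2:ℝ)⁻¹) := by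
  set u := |a| with hu
  set v := |b| with hv
  have hu0 : 0 < u := abs_pos.2 ha
  have hv0 : 0 < v := abs_pos.2 hb
  have hA : 0 < a ^ 2 + b ^ 2 := by positivity
  have hrw : |a| ^ (-(2:ℝ)⁻¹) * |b| ^ (-(2:ℝ)⁻¹) = ((u * v) ^ ((2:ℝ)⁻¹))⁻¹ := by
    rw [Real.mul_rpow hu0.le hv0.le, Real.rpow_neg hu0.le, Real.rpow_neg hv0.le, mul_inv]
  rw [hrw]
  set w := (u * v) ^ ((2:ℝ)⁻¹) with hw
  have hw0 : 0 < w := Real.rpow_pos_of_pos (by positivity) _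
  have hw2 : w ^ 2 = u * v := by
    rw [hw, ← Real.rpow_natCast ((u*v) ^ ((2:ℝ)⁻¹)) 2, ← Real.rpow_mul (by positivity)]
    norm_num
  rw [div_le_iff₀ hA, inv_mul_eq_div, le_div_iff₀ hw0]
  have hsq : (v * w) ^ 2 ≤ ((a ^ 2 + b ^ 2)) ^ 2 := by
    have e1 : (v * w) ^ 2 = u * v ^ 3 := by rw [mul_pow, hw2]; ring
    have e2 : 2 * (u * v) ≤ a ^ 2 + b ^ 2 := by
      have := two_mul_le_add_sq u v
      have hu2 : u ^ 2 = a ^ 2 := sq_abs a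
      have hv2 : v ^ 2 = b ^ 2 := sq_abs b
      nlinarith
    have e3 : v ^ 2 ≤ a ^ 2 + b ^ 2 := by
      have hv2 : v ^ 2 = b ^ 2 := sq_abs b
      nlinarith [sq_nonneg a]
    nlinarith [mul_pos hu0 hv0, mul_pos (mul_pos hu0 hv0) hv0]
  exact le_of_pow_le_pow_left₀ two_ne_zero hA.le hsq

lemma key_bound' {a b : ℝ} (ha : a ≠ 0) (hb : b ≠ 0) :
    |a| / (a ^ 2 + b ^ 2) ≤ |a| ^ (-(2:ℝ)⁻¹) * |b| ^ (-(2:ℝ)⁻¹) := by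
  have := key_bound hb ha
  rw [add_comm (b ^ 2)] at this
  linarith [this, mul_comm (|b| ^ (-(2:ℝ)⁻¹)) (|a| ^ (-(2:ℝ)⁻¹))]

lemma gfun_nonneg (c t : ℝ) : 0 ≤ gfun c t := Real.rpow_nonneg (abs_nonneg _) _

lemma gfun_integrableOn_Icc (c : ℝ) :
    IntegrableOn (fun t : ℝ => gfun c t) (Icc (c - 4) (c + 4)) volume := by
  rw [← intervalIntegrable_iff_integrableOn_Icc_of_le (by linarith)]
  exact gfun_intervalIntegrable c

lemma gfun_setIntegral (c : ℝ) :
    (∫ t in Icc (c - 4) (c + 4), gfun c t) = ∫ s in (-4:ℝ)..4, |s| ^ (-(2:ℝ)⁻¹) := by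
  rw [← gfun_integral c, intervalIntegral.integral_of_le (by linarith),
    integral_Icc_eq_integral_Ioc]

/-- the box around `x` containing the annulus -/
def boxAt (x : ℝ × ℝ) : Set (ℝ × ℝ) := Icc (x.1 - 4) (x.1 + 4) ×ˢ Icc (x.2 - 4) (x.2 + 4)

lemma annulus_subset_boxAt {x : ℝ × ℝ} (h1 : |x.1| ≤ 2) (h2 : |x.2| ≤ 2) :
    annulus ⊆ boxAt x := by
  rw [abs_le] at h1 h2
  intro y hy
  obtain ⟨hy1, hy2⟩ := annulus_subset_box hy
  exact ⟨⟨by linarith [hy1.1], by linarith [hy1.2]⟩, ⟨by linarith [hy2.1], by linarith [hy2.2]⟩⟩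

lemma G_integrableOn_boxAt (x : ℝ × ℝ) :
    IntegrableOn (fun y : ℝ × ℝ => gfun x.1 y.1 * gfun x.2 y.2) (boxAt x) volume := by
  rw [IntegrableOn, boxAt, Measure.volume_eq_prod, ← Measure.prod_restrict]
  exact (gfun_integrableOn_Icc x.1).mul_prod (gfun_integrableOn_Icc x.2)

lemma G_integral_boxAt (x : ℝ × ℝ) :
    (∫ y in boxAt x, gfun x.1 y.1 * gfun x.2 y.2) =
      (∫ s in (-4:ℝ)..4, |s| ^ (-(2:ℝ)⁻¹)) ^ 2 := by
  rw [boxAt, Measure.volume_eq_prod, ← Measure.prod_restrict, integral_prod_mul,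
    gfun_setIntegral, gfun_setIntegral, sq]

lemma G_integrableOn_annulus {x : ℝ × ℝ} (h1 : |x.1| ≤ 2) (h2 : |x.2| ≤ 2) :
    IntegrableOn (fun y : ℝ × ℝ => gfun x.1 y.1 * gfun x.2 y.2) annulus volume :=
  (G_integrableOn_boxAt x).mono_set (annulus_subset_boxAt h1 h2)

lemma ae_ne_lines (x : ℝ × ℝ) :
    ∀ᵐ y : ℝ × ℝ ∂(volume.restrict annulus), y.1 ≠ x.1 ∧ y.2 ≠ x.2 := by
  have l1 : (volume : Measure (ℝ × ℝ)) {y : ℝ × ℝ | y.1 = x.1} = 0 := by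
    have : {y : ℝ × ℝ | y.1 = x.1} = ({x.1} : Set ℝ) ×ˢ (univ : Set ℝ) := by
      ext ⟨y1, y2⟩; simp [Set.mem_prod, eq_comm]
    rw [this, Measure.volume_eq_prod, Measure.prod_prod]
    simp
  have l2 : (volume : Measure (ℝ × ℝ)) {y : ℝ × ℝ | y.2 = x.2} = 0 := by
    have : {y : ℝ × ℝ | y.2 = x.2} = (univ : Set ℝ) ×ˢ ({x.2} : Set ℝ) := by
      ext ⟨y1, y2⟩; simp [Set.mem_prod, eq_comm]
    rw [this, Measure.volume_eq_prod, Measure.prod_prod]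
    simp
  have : (volume : Measure (ℝ × ℝ)) ({y : ℝ × ℝ | y.1 = x.1} ∪ {y | y.2 = x.2}) = 0 :=
    measure_union_null l1 l2
  have h : ∀ᵐ y : ℝ × ℝ ∂(volume.restrict annulus),
      y ∉ ({y : ℝ × ℝ | y.1 = x.1} ∪ {y | y.2 = x.2}) :=
    ae_mono Measure.restrict_le_self (measure_eq_zero_iff_ae_notMem.mp this)
  filter_upwards [h] with y hy
  simp only [Set.mem_union, Set.mem_setOf_eq] at hy
  push_neg at hy
  exact hy

/-- master integrability lemma on the annulus -/
lemma integrableOn_annulus_of_bound {f : ℝ × ℝ → ℝ} {x : ℝ × ℝ} {C : ℝ}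
    (hmeas : AEStronglyMeasurable f (volume.restrict annulus))
    (h1 : |x.1| ≤ 2) (h2 : |x.2| ≤ 2)
    (hb : ∀ y ∈ annulus, y.1 ≠ x.1 → y.2 ≠ x.2 → |f y| ≤ C * (gfun x.1 y.1 * gfun x.2 y.2)) :
    IntegrableOn f annulus volume := by
  refine Integrable.mono' (((G_integrableOn_annulus h1 h2).const_mul C)) hmeas ?_
  filter_upwards [ae_ne_lines x, ae_restrict_mem annulus_meas] with y hy hmem
  exact hb y hmem hy.1 hy.2

/-- the combined flux integrand -/
noncomputable def Hfun (Ω : ℝ × ℝ → ℝ) (r θ : ℝ) (y : ℝ × ℝ) : ℝ :=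
  (Ω y * (-(r * Real.sin θ - y.2)) /
      ((r * Real.cos θ - y.1) ^ 2 + (r * Real.sin θ - y.2) ^ 2) * Real.cos θ +
   Ω y * (r * Real.cos θ - y.1) /
      ((r * Real.cos θ - y.1) ^ 2 + (r * Real.sin θ - y.2) ^ 2) * Real.sin θ) * r

lemma Hfun_bound {Ω : ℝ × ℝ → ℝ} {C r : ℝ} (hC : 0 ≤ C) (hr : |r| ≤ 2) (θ : ℝ)
    {y : ℝ × ℝ} (hΩ : |Ω y| ≤ C)
    (h1 : y.1 ≠ r * Real.cos θ) (h2 : y.2 ≠ r * Real.sin θ) :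
    |Hfun Ω r θ y| ≤ (4 * C) * (gfun (r * Real.cos θ) y.1 * gfun (r * Real.sin θ) y.2) := by
  set a := r * Real.cos θ - y.1 with ha'
  set b := r * Real.sin θ - y.2 with hb'
  have ha : a ≠ 0 := sub_ne_zero.2 (Ne.symm h1)
  have hb : b ≠ 0 := sub_ne_zero.2 (Ne.symm h2)
  have hD : 0 < a ^ 2 + b ^ 2 := by positivity
  set D := a ^ 2 + b ^ 2 with hD'
  set P := |a| ^ (-(2:ℝ)⁻¹) * |b| ^ (-(2:ℝ)⁻¹) with hP'
  have hP0 : 0 ≤ P := by positivity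
  have kb : |b| / D ≤ P := key_bound ha hb
  have kb' : |a| / D ≤ P := key_bound' ha hb
  have hgf : gfun (r * Real.cos θ) y.1 * gfun (r * Real.sin θ) y.2 = P := by
    simp only [gfun, hP', ha', hb']
  rw [hgf]
  have e1 : |Ω y * (-b) / D * Real.cos θ| ≤ C * P := by
    rw [abs_mul, abs_div, abs_mul, abs_neg, abs_of_pos hD]
    calc |Ω y| * |b| / D * |Real.cos θ|
        ≤ |Ω y| * |b| / D * 1 :=
          mul_le_mul_of_nonneg_left (abs_cos_le_one θ) (by positivity)
      _ = |Ω y| * (|b| / D) := by ring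
      _ ≤ C * (|b| / D) := mul_le_mul_of_nonneg_right hΩ (by positivity)
      _ ≤ C * P := mul_le_mul_of_nonneg_left kb hC
  have e2 : |Ω y * a / D * Real.sin θ| ≤ C * P := by
    rw [abs_mul, abs_div, abs_mul, abs_of_pos hD]
    calc |Ω y| * |a| / D * |Real.sin θ|
        ≤ |Ω y| * |a| / D * 1 :=
          mul_le_mul_of_nonneg_left (abs_sin_le_one θ) (by positivity)
      _ = |Ω y| * (|a| / D) := by ring
      _ ≤ C * (|a| / D) := mul_le_mul_of_nonneg_right hΩ (by positivity)
      _ ≤ C * P := mul_le_mul_of_nonneg_left kb' hC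
  calc |Hfun Ω r θ y|
      = |Ω y * (-b) / D * Real.cos θ + Ω y * a / D * Real.sin θ| * |r| := by
        rw [Hfun, abs_mul]
    _ ≤ (|Ω y * (-b) / D * Real.cos θ| + |Ω y * a / D * Real.sin θ|) * |r| :=
        mul_le_mul_of_nonneg_right (abs_add_le _ _) (abs_nonneg r)
    _ ≤ (C * P + C * P) * 2 := by
        apply mul_le_mul (by linarith) hr (abs_nonneg r) (by positivity)
    _ = (4 * C) * P := by ring

lemma abs_mul_cos_le {r : ℝ} (hr : |r| ≤ 2) (θ : ℝ) : |r * Real.cos θ| ≤ 2 := by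
  rw [abs_mul]
  calc |r| * |Real.cos θ| ≤ 2 * 1 :=
        mul_le_mul hr (abs_cos_le_one θ) (abs_nonneg _) (by norm_num)
    _ = 2 := by norm_num

lemma abs_mul_sin_le {r : ℝ} (hr : |r| ≤ 2) (θ : ℝ) : |r * Real.sin θ| ≤ 2 := by
  rw [abs_mul]
  calc |r| * |Real.sin θ| ≤ 2 * 1 :=
        mul_le_mul hr (abs_sin_le_one θ) (abs_nonneg _) (by norm_num)
    _ = 2 := by norm_num

lemma Hfun_integrableOn {Ω : ℝ × ℝ → ℝ} (hΩ : Continuous Ω) {C r : ℝ} (hC : 0 ≤ C)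
    (hΩC : ∀ y ∈ annulus, |Ω y| ≤ C) (hr : |r| ≤ 2) (θ : ℝ) :
    IntegrableOn (Hfun Ω r θ) annulus volume := by
  apply integrableOn_annulus_of_bound (x := (r * Real.cos θ, r * Real.sin θ)) (C := 4 * C)
  · refine Measurable.aestronglyMeasurable ?_
    unfold Hfun; fun_prop
  · exact abs_mul_cos_le hr θ
  · exact abs_mul_sin_le hr θ
  · intro y hy h1 h2
    exact Hfun_bound hC hr θ (hΩC y hy) h1 h2

lemma f1_integrableOn {Ω : ℝ × ℝ → ℝ} (hΩ : Continuous Ω) {C : ℝ} (hC : 0 ≤ C)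
    (hΩC : ∀ y ∈ annulus, |Ω y| ≤ C) {x : ℝ × ℝ} (h1 : |x.1| ≤ 2) (h2 : |x.2| ≤ 2) :
    IntegrableOn (fun y : ℝ × ℝ =>
      Ω y * (-(x.2 - y.2)) / ((x.1 - y.1) ^ 2 + (x.2 - y.2) ^ 2)) annulus volume := by
  apply integrableOn_annulus_of_bound (x := x) (C := C) (Measurable.aestronglyMeasurable
    (by fun_prop)) h1 h2
  intro y hy hy1 hy2
  have ha : x.1 - y.1 ≠ 0 := sub_ne_zero.2 (Ne.symm hy1)
  have hb : x.2 - y.2 ≠ 0 := sub_ne_zero.2 (Ne.symm hy2)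
  have hD : 0 < (x.1 - y.1) ^ 2 + (x.2 - y.2) ^ 2 := by positivity
  have kb := key_bound ha hb
  have hgf : gfun x.1 y.1 * gfun x.2 y.2
      = |x.1 - y.1| ^ (-(2:ℝ)⁻¹) * |x.2 - y.2| ^ (-(2:ℝ)⁻¹) := by simp [gfun]
  rw [hgf, abs_div, abs_mul, abs_neg, abs_of_pos hD]
  calc |Ω y| * |x.2 - y.2| / ((x.1 - y.1) ^ 2 + (x.2 - y.2) ^ 2)
      = |Ω y| * (|x.2 - y.2| / ((x.1 - y.1) ^ 2 + (x.2 - y.2) ^ 2)) := by ring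
    _ ≤ C * (|x.1 - y.1| ^ (-(2:ℝ)⁻¹) * |x.2 - y.2| ^ (-(2:ℝ)⁻¹)) := by
        apply mul_le_mul (hΩC y hy) kb (by positivity) hC

lemma f2_integrableOn {Ω : ℝ × ℝ → ℝ} (hΩ : Continuous Ω) {C : ℝ} (hC : 0 ≤ C)
    (hΩC : ∀ y ∈ annulus, |Ω y| ≤ C) {x : ℝ × ℝ} (h1 : |x.1| ≤ 2) (h2 : |x.2| ≤ 2) :
    IntegrableOn (fun y : ℝ × ℝ =>
      Ω y * (x.1 - y.1) / ((x.1 - y.1) ^ 2 + (x.2 - y.2) ^ 2)) annulus volume := by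
  apply integrableOn_annulus_of_bound (x := x) (C := C) (Measurable.aestronglyMeasurable
    (by fun_prop)) h1 h2
  intro y hy hy1 hy2
  have ha : x.1 - y.1 ≠ 0 := sub_ne_zero.2 (Ne.symm hy1)
  have hb : x.2 - y.2 ≠ 0 := sub_ne_zero.2 (Ne.symm hy2)
  have hD : 0 < (x.1 - y.1) ^ 2 + (x.2 - y.2) ^ 2 := by positivity
  have kb := key_bound' ha hb
  have hgf : gfun x.1 y.1 * gfun x.2 y.2
      = |x.1 - y.1| ^ (-(2:ℝ)⁻¹) * |x.2 - y.2| ^ (-(2:ℝ)⁻¹) := by simp [gfun]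
  rw [hgf, abs_div, abs_mul, abs_of_pos hD]
  calc |Ω y| * |x.1 - y.1| / ((x.1 - y.1) ^ 2 + (x.2 - y.2) ^ 2)
      = |Ω y| * (|x.1 - y.1| / ((x.1 - y.1) ^ 2 + (x.2 - y.2) ^ 2)) := by ring
    _ ≤ C * (|x.1 - y.1| ^ (-(2:ℝ)⁻¹) * |x.2 - y.2| ^ (-(2:ℝ)⁻¹)) := by
        apply mul_le_mul (hΩC y hy) kb (by positivity) hC

lemma denom_ne_zero {r : ℝ} (hr0 : 0 < r) {y : ℝ × ℝ} (hy : y.1 ^ 2 + y.2 ^ 2 ≠ r ^ 2)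
    (θ : ℝ) : (r * Real.cos θ - y.1) ^ 2 + (r * Real.sin θ - y.2) ^ 2 ≠ 0 := by
  intro h
  have h1 : r * Real.cos θ - y.1 = 0 := by
    nlinarith [sq_nonneg (r * Real.cos θ - y.1), sq_nonneg (r * Real.sin θ - y.2)]
  have h2 : r * Real.sin θ - y.2 = 0 := by
    nlinarith [sq_nonneg (r * Real.cos θ - y.1), sq_nonneg (r * Real.sin θ - y.2)]
  apply hy
  have e1 : y.1 = r * Real.cos θ := by linarith
  have e2 : y.2 = r * Real.sin θ := by linarith
  rw [e1, e2]
  nlinarith [sin_sq_add_cos_sq θ]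

lemma Hfun_continuous_theta {Ω : ℝ × ℝ → ℝ} {r : ℝ} (hr0 : 0 < r) {y : ℝ × ℝ}
    (hy : y.1 ^ 2 + y.2 ^ 2 ≠ r ^ 2) : Continuous fun θ => Hfun Ω r θ y := by
  have hden : Continuous fun θ : ℝ =>
      (r * Real.cos θ - y.1) ^ 2 + (r * Real.sin θ - y.2) ^ 2 := by fun_prop
  have hq1 : Continuous fun θ : ℝ => Ω y * (-(r * Real.sin θ - y.2)) /
      ((r * Real.cos θ - y.1) ^ 2 + (r * Real.sin θ - y.2) ^ 2) :=
    Continuous.div (by fun_prop) hden (denom_ne_zero hr0 hy)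
  have hq2 : Continuous fun θ : ℝ => Ω y * (r * Real.cos θ - y.1) /
      ((r * Real.cos θ - y.1) ^ 2 + (r * Real.sin θ - y.2) ^ 2) :=
    Continuous.div (by fun_prop) hden (denom_ne_zero hr0 hy)
  unfold Hfun
  exact (((hq1.mul Real.continuous_cos).add (hq2.mul Real.continuous_sin)).mul continuous_const)

lemma inner_integral_zero {Ω : ℝ × ℝ → ℝ} {r : ℝ} (hr0 : 0 < r) {y : ℝ × ℝ}
    (hy : y.1 ^ 2 + y.2 ^ 2 ≠ r ^ 2) :
    (∫ θ in (0:ℝ)..(2 * π), Hfun Ω r θ y) = 0 := by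
  have hD := denom_ne_zero hr0 hy
  set φ := fun θ : ℝ => -(Ω y / 2) *
    Real.log ((r * Real.cos θ - y.1) ^ 2 + (r * Real.sin θ - y.2) ^ 2) with hφ
  have hderiv : ∀ θ ∈ uIcc (0:ℝ) (2 * π), HasDerivAt φ (Hfun Ω r θ y) θ := by
    intro θ _
    have hu : HasDerivAt (fun θ : ℝ => r * Real.cos θ - y.1) (r * (-Real.sin θ)) θ :=
      ((Real.hasDerivAt_cos θ).const_mul r).sub_const y.1
    have hv : HasDerivAt (fun θ : ℝ => r * Real.sin θ - y.2) (r * Real.cos θ) θ :=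
      ((Real.hasDerivAt_sin θ).const_mul r).sub_const y.2
    have hDder : HasDerivAt (fun θ : ℝ =>
        (r * Real.cos θ - y.1) ^ 2 + (r * Real.sin θ - y.2) ^ 2)
        ((2:ℕ) * (r * Real.cos θ - y.1) ^ 1 * (r * (-Real.sin θ)) +
         (2:ℕ) * (r * Real.sin θ - y.2) ^ 1 * (r * Real.cos θ)) θ :=
      (hu.pow 2).add (hv.pow 2)
    have hlog := (Real.hasDerivAt_log (hD θ)).comp θ hDder
    have hfinal := hlog.const_mul (-(Ω y / 2))
    refine hfinal.congr_deriv ?_; symm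
    have hDpos : ((r * Real.cos θ - y.1) ^ 2 + (r * Real.sin θ - y.2) ^ 2) ≠ 0 := hD θ
    show Hfun Ω r θ y = _
    rw [Hfun]
    field_simp
    ring
  have hint : IntervalIntegrable (fun θ => Hfun Ω r θ y) volume 0 (2 * π) :=
    (Hfun_continuous_theta hr0 hy).intervalIntegrable _ _
  rw [intervalIntegral.integral_eq_sub_of_hasDerivAt hderiv hint]
  simp [hφ, Real.cos_two_pi, Real.sin_two_pi]

lemma circle_null (r : ℝ) :
    (volume : Measure (ℝ × ℝ)) {y : ℝ × ℝ | y.1 ^ 2 + y.2 ^ 2 = r ^ 2} = 0 := by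
  have hS : MeasurableSet {y : ℝ × ℝ | y.1 ^ 2 + y.2 ^ 2 = r ^ 2} := by
    have : IsClosed {y : ℝ × ℝ | y.1 ^ 2 + y.2 ^ 2 = r ^ 2} :=
      isClosed_eq (by fun_prop) continuous_const
    exact this.measurableSet
  rw [Measure.volume_eq_prod, Measure.measure_prod_null hS]
  refine Filter.Eventually.of_forall (fun y1 => ?_)
  have hsub : (Prod.mk y1 ⁻¹' {y : ℝ × ℝ | y.1 ^ 2 + y.2 ^ 2 = r ^ 2}) ⊆
      {Real.sqrt (r ^ 2 - y1 ^ 2), -Real.sqrt (r ^ 2 - y1 ^ 2)} := by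
    intro y2 h
    have h' : y2 ^ 2 = r ^ 2 - y1 ^ 2 := by
      simp only [Set.mem_preimage, Set.mem_setOf_eq] at h; linarith
    have habs : |y2| = Real.sqrt (r ^ 2 - y1 ^ 2) := by
      rw [← Real.sqrt_sq_eq_abs, h']
    rcases (abs_eq (Real.sqrt_nonneg _)).mp habs with h1 | h1 <;> simp [h1]
  exact measure_mono_null hsub
    (((Set.finite_singleton _).insert _).measure_zero volume)

lemma flux_zero_main {Ω : ℝ × ℝ → ℝ} (hΩ : Continuous Ω) {r : ℝ} (hr0 : 0 < r)
    (hr2 : r ≤ 2) :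
    (∫ θ in (0 : ℝ)..(2 * π),
        (biotSavart₁ Ω (r * Real.cos θ, r * Real.sin θ) * Real.cos θ +
         biotSavart₂ Ω (r * Real.cos θ, r * Real.sin θ) * Real.sin θ) * r) = 0 := by
  obtain ⟨C, hC⟩ := annulus_isCompact.exists_bound_of_continuousOn hΩ.continuousOn
  have hmem : ((1 : ℝ), (0 : ℝ)) ∈ annulus := by
    constructor <;> norm_num
  have hC0 : 0 ≤ C := le_trans (norm_nonneg _) (hC _ hmem)
  have hΩC : ∀ y ∈ annulus, |Ω y| ≤ C := fun y hy => hC y hy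
  have hr : |r| ≤ 2 := by rw [abs_of_pos hr0]; exact hr2
  -- Step 1 : pointwise identity
  have step1 : ∀ θ : ℝ,
      (biotSavart₁ Ω (r * Real.cos θ, r * Real.sin θ) * Real.cos θ +
       biotSavart₂ Ω (r * Real.cos θ, r * Real.sin θ) * Real.sin θ) * r
      = (1 / (2 * π)) * ∫ y in annulus, Hfun Ω r θ y := by
    intro θ
    have h1 : IntegrableOn (fun y : ℝ × ℝ =>
        Ω y * (-(r * Real.sin θ - y.2)) /
          ((r * Real.cos θ - y.1) ^ 2 + (r * Real.sin θ - y.2) ^ 2)) annulus volume := by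
      have := f1_integrableOn hΩ hC0 hΩC (x := (r * Real.cos θ, r * Real.sin θ))
        (abs_mul_cos_le hr θ) (abs_mul_sin_le hr θ)
      simpa using this
    have h2 : IntegrableOn (fun y : ℝ × ℝ =>
        Ω y * (r * Real.cos θ - y.1) /
          ((r * Real.cos θ - y.1) ^ 2 + (r * Real.sin θ - y.2) ^ 2)) annulus volume := by
      have := f2_integrableOn hΩ hC0 hΩC (x := (r * Real.cos θ, r * Real.sin θ))
        (abs_mul_cos_le hr θ) (abs_mul_sin_le hr θ)
      simpa using this
    have hRHS : (∫ y in annulus, Hfun Ω r θ y)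
        = ((∫ y in annulus, Ω y * (-(r * Real.sin θ - y.2)) /
              ((r * Real.cos θ - y.1) ^ 2 + (r * Real.sin θ - y.2) ^ 2)) * Real.cos θ +
           (∫ y in annulus, Ω y * (r * Real.cos θ - y.1) /
              ((r * Real.cos θ - y.1) ^ 2 + (r * Real.sin θ - y.2) ^ 2)) * Real.sin θ) * r := by
      simp only [Hfun]
      rw [MeasureTheory.integral_mul_const]
      rw [MeasureTheory.integral_add (h1.mul_const (Real.cos θ)) (h2.mul_const (Real.sin θ))]
      rw [MeasureTheory.integral_mul_const, MeasureTheory.integral_mul_const]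
    rw [hRHS]
    simp only [biotSavart₁, biotSavart₂]
    ring
  -- Step 2 : product integrability
  have hmeas : AEStronglyMeasurable (fun p : ℝ × (ℝ × ℝ) => Hfun Ω r p.1 p.2)
      ((volume.restrict (Ioc (0:ℝ) (2 * π))).prod (volume.restrict annulus)) := by
    refine Measurable.aestronglyMeasurable ?_
    unfold Hfun; fun_prop
  set K : ℝ := ∫ s in (-4:ℝ)..4, |s| ^ (-(2:ℝ)⁻¹) with hK
  have hbd : ∀ θ : ℝ, (∫ y in annulus, ‖Hfun Ω r θ y‖) ≤ 4 * C * K ^ 2 := by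
    intro θ
    set x : ℝ × ℝ := (r * Real.cos θ, r * Real.sin θ) with hx
    have hx1 : |x.1| ≤ 2 := abs_mul_cos_le hr θ
    have hx2 : |x.2| ≤ 2 := abs_mul_sin_le hr θ
    have hmaj : IntegrableOn (fun y : ℝ × ℝ =>
        4 * C * (gfun x.1 y.1 * gfun x.2 y.2)) annulus volume :=
      (G_integrableOn_annulus hx1 hx2).const_mul _
    have s1 : (∫ y in annulus, ‖Hfun Ω r θ y‖)
        ≤ ∫ y in annulus, 4 * C * (gfun x.1 y.1 * gfun x.2 y.2) := by
      refine integral_mono_ae ((Hfun_integrableOn hΩ hC0 hΩC hr θ).norm) hmaj ?_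
      filter_upwards [ae_ne_lines x, ae_restrict_mem annulus_meas] with y hy hmem
      rw [Real.norm_eq_abs]
      exact Hfun_bound hC0 hr θ (hΩC y hmem) hy.1 hy.2
    have s2 : (∫ y in annulus, 4 * C * (gfun x.1 y.1 * gfun x.2 y.2))
        ≤ ∫ y in boxAt x, 4 * C * (gfun x.1 y.1 * gfun x.2 y.2) := by
      refine setIntegral_mono_set ((G_integrableOn_boxAt x).const_mul _) ?_
        (HasSubset.Subset.eventuallyLE (annulus_subset_boxAt hx1 hx2))
      refine Filter.Eventually.of_forall (fun y => ?_)
      have := gfun_nonneg x.1 y.1; have := gfun_nonneg x.2 y.2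
      positivity
    have s3 : (∫ y in boxAt x, 4 * C * (gfun x.1 y.1 * gfun x.2 y.2)) = 4 * C * K ^ 2 := by
      rw [MeasureTheory.integral_const_mul, G_integral_boxAt]
    linarith
  have hprod : Integrable (fun p : ℝ × (ℝ × ℝ) => Hfun Ω r p.1 p.2)
      ((volume.restrict (Ioc (0:ℝ) (2 * π))).prod (volume.restrict annulus)) := by
    rw [integrable_prod_iff hmeas]
    constructor
    · exact Filter.Eventually.of_forall (fun θ => Hfun_integrableOn hΩ hC0 hΩC hr θ)
    · haveI : IsFiniteMeasure (volume.restrict (Ioc (0:ℝ) (2 * π))) :=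
        ⟨by rw [Measure.restrict_apply_univ]; simp [Real.volume_Ioc]; exact ENNReal.mul_lt_top (by simp) ENNReal.ofReal_lt_top⟩
      refine Integrable.mono' (integrable_const (4 * C * K ^ 2))
        hmeas.norm.integral_prod_right' ?_
      refine Filter.Eventually.of_forall (fun θ => ?_)
      rw [Real.norm_eq_abs, abs_of_nonneg (integral_nonneg (fun y => norm_nonneg _))]
      exact hbd θ
  -- Step 3 : conclude
  have twopi_pos : (0:ℝ) < 2 * π := by positivity
  calc (∫ θ in (0 : ℝ)..(2 * π),
        (biotSavart₁ Ω (r * Real.cos θ, r * Real.sin θ) * Real.cos θ +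
         biotSavart₂ Ω (r * Real.cos θ, r * Real.sin θ) * Real.sin θ) * r)
      = ∫ θ in (0 : ℝ)..(2 * π), (1 / (2 * π)) * ∫ y in annulus, Hfun Ω r θ y :=
        intervalIntegral.integral_congr (fun θ _ => step1 θ)
    _ = (1 / (2 * π)) * ∫ θ in (0 : ℝ)..(2 * π), ∫ y in annulus, Hfun Ω r θ y :=
        intervalIntegral.integral_const_mul _ _
    _ = (1 / (2 * π)) * ∫ θ in Ioc (0:ℝ) (2 * π), ∫ y in annulus, Hfun Ω r θ y := by
        rw [intervalIntegral.integral_of_le twopi_pos.le]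
    _ = (1 / (2 * π)) * ∫ y in annulus, ∫ θ in Ioc (0:ℝ) (2 * π), Hfun Ω r θ y := by
        rw [MeasureTheory.integral_integral_swap hprod]
    _ = 0 := by
        have hae : ∀ᵐ y : ℝ × ℝ ∂(volume.restrict annulus),
            (∫ θ in Ioc (0:ℝ) (2 * π), Hfun Ω r θ y) = 0 := by
          have hnull := circle_null r
          have h : ∀ᵐ y : ℝ × ℝ ∂(volume.restrict annulus),
              y ∉ {y : ℝ × ℝ | y.1 ^ 2 + y.2 ^ 2 = r ^ 2} :=
            ae_mono Measure.restrict_le_self (measure_eq_zero_iff_ae_notMem.mp hnull)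
          filter_upwards [h] with y hy
          have hy' : y.1 ^ 2 + y.2 ^ 2 ≠ r ^ 2 := hy
          rw [← intervalIntegral.integral_of_le twopi_pos.le]
          exact inner_integral_zero hr0 hy'
        rw [integral_congr_ae hae]
        simp

/-- The Biot–Savart field of a continuous vorticity on the annulus has zero flux
through each boundary circle (`r = 1` and `r = 2`). -/
theorem biotSavart_flux_zero (ω : ℝ × ℝ → ℝ) (hω : ContinuousOn ω annulus) :
    ∀ r ∈ ({1, 2} : Set ℝ),
      (∫ θ in (0 : ℝ)..(2 * π),
        (biotSavart₁ ω (r * Real.cos θ, r * Real.sin θ) * Real.cos θ +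
         biotSavart₂ ω (r * Real.cos θ, r * Real.sin θ) * Real.sin θ) * r) = 0 := by
  intro r hr
  -- extend ω to a continuous function on the whole plane
  obtain ⟨Ω, hΩeq⟩ := ContinuousMap.exists_restrict_eq (Y := ℝ) annulus_isClosed
    ⟨annulus.restrict ω, hω.restrict⟩
  have heq : ∀ y ∈ annulus, ω y = Ω y := by
    intro y hy
    have := congrFun (congrArg DFunLike.coe hΩeq) ⟨y, hy⟩
    exact this.symm
  have hbs1 : ∀ x : ℝ × ℝ, biotSavart₁ ω x = biotSavart₁ Ω x := by
    intro x
    unfold biotSavart₁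
    congr 1
    refine setIntegral_congr_fun annulus_meas (fun y hy => ?_)
    rw [heq y hy]
  have hbs2 : ∀ x : ℝ × ℝ, biotSavart₂ ω x = biotSavart₂ Ω x := by
    intro x
    unfold biotSavart₂
    congr 1
    refine setIntegral_congr_fun annulus_meas (fun y hy => ?_)
    rw [heq y hy]
  have hrw : (∫ θ in (0 : ℝ)..(2 * π),
        (biotSavart₁ ω (r * Real.cos θ, r * Real.sin θ) * Real.cos θ +
         biotSavart₂ ω (r * Real.cos θ, r * Real.sin θ) * Real.sin θ) * r)
      = ∫ θ in (0 : ℝ)..(2 * π),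
        (biotSavart₁ Ω (r * Real.cos θ, r * Real.sin θ) * Real.cos θ +
         biotSavart₂ Ω (r * Real.cos θ, r * Real.sin θ) * Real.sin θ) * r := by
    refine intervalIntegral.integral_congr (fun θ _ => ?_)
    rw [hbs1, hbs2]
  rw [hrw]
  have hΩcont : Continuous Ω := Ω.continuous
  rcases hr with rfl | hr
  · exact flux_zero_main hΩcont one_pos (by norm_num)
  · rw [Set.mem_singleton_iff] at hr
    subst hr
    exact flux_zero_main hΩcont two_pos (by norm_num)
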